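/- arXiv:2201.00782 — 2 statements merged into one kernel-verified Lean document; each statement's English description precedes it below -/
import Mathlib

section
/- For positive rational q = c/d in lowest terms, the ordinary generating function of (|W_{q,n}|)_{n≥0} is W_q(x) = (1 − x^{c+d}) / ((1 − x)(1 − x^{c+d} − P_q(x,x))), where P_q(x,x) = Σ_{i=0}^{c−1} x^{1+⌊i/q⌋+i}. Formally: (1−x)(1 − x^{c+d} − P_q(x,x)) · Σ_{n≥0} |W_{q,n}| x^n = 1 − x^{c+d} as formal power series. -/
/-- `isValid c d w` says every maximal factor of `w` of the form `0^a 1^b`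
with `a > 0` satisfies `a * (c/d) > b`, i.e. `c*a > d*b`.
Here `false` plays the role of `0` and `true` of `1`; maximality is expressed
by requiring the prefix to end with `1` (or be empty) and the suffix to start
with `0` (or be empty). -/
def isValid (c d : ℕ) (w : List Bool) : Prop :=
  ∀ p s : List Bool, ∀ a b : ℕ,
    w = p ++ List.replicate a false ++ List.replicate b true ++ s →
    (p = [] ∨ p.getLast? = some true) →
    (s = [] ∨ s.head? = some false) →
    0 < a → d * b < c * a

/-- number of words of length `n` in `W_{c/d,n}` -/
noncomputable def wcount (c d n : ℕ) : ℕ :=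
  Nat.card {w : List Bool // w.length = n ∧ isValid c d w}

namespace Stmt10Aux

open List

/-! ### List helpers -/

lemma rep_head {a : ℕ} (ha : 0 < a) (l : List Bool) (x : Bool) :
    (replicate a x ++ l).head? = some x := by
  cases a with
  | zero => omega
  | succ a' => simp [replicate_succ]

lemma rep_last {b : ℕ} (hb : 0 < b) (l : List Bool) (x : Bool) :
    (l ++ replicate b x).getLast? = some x := by
  cases b with
  | zero => omega
  | succ b' =>
    rw [replicate_succ', ← List.append_assoc, List.getLast?_concat]

lemma eq_rep_of_pre {x : Bool} {m : ℕ} {t u : List Bool} (h : replicate m x = t ++ u) :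
    t = replicate t.length x ∧ u = replicate u.length x ∧ t.length + u.length = m := by
  refine ⟨?_, ?_, by simpa using congrArg List.length h.symm⟩
  · rw [List.eq_replicate_length]
    intro b hb
    exact eq_of_mem_replicate (h ▸ List.mem_append_left u hb)
  · rw [List.eq_replicate_length]
    intro b hb
    exact eq_of_mem_replicate (h ▸ List.mem_append_right t hb)

lemma rep_cancel {x : Bool} {m n : ℕ} {Y Z : List Bool} (h : m ≤ n)
    (he : replicate m x ++ Y = replicate n x ++ Z) : Y = replicate (n - m) x ++ Z := by
  have h2 := congrArg (List.drop m) he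
  rw [List.drop_append, List.drop_append] at h2
  simpa [List.drop_replicate, Nat.sub_self, Nat.sub_eq_zero_of_le h] using h2

lemma trues_eq_aux {b b' : ℕ} {r s : List Bool} (h : b ≤ b')
    (hr : r = [] ∨ r.head? = some false)
    (he : replicate b true ++ r = replicate b' true ++ s) : b = b' ∧ r = s := by
  have h2 := rep_cancel h he
  rcases Nat.eq_or_lt_of_le h with rfl | hlt
  · simp at h2; exact ⟨rfl, h2⟩
  · exfalso
    have hb : 0 < b' - b := by omega
    have : r.head? = some true := by rw [h2]; exact rep_head hb _ _
    rcases hr with rfl | hr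
    · simp at this
    · rw [hr] at this; simp at this

lemma trues_eq {b b' : ℕ} {r s : List Bool}
    (hr : r = [] ∨ r.head? = some false) (hs : s = [] ∨ s.head? = some false)
    (he : replicate b true ++ r = replicate b' true ++ s) : b = b' ∧ r = s := by
  rcases Nat.le_total b b' with h | h
  · exact trues_eq_aux h hr he
  · obtain ⟨h1, h2⟩ := trues_eq_aux h hs he.symm
    exact ⟨h1.symm, h2.symm⟩

/-- uniqueness of the maximal-block split -/
lemma split_unique {a b a' b' : ℕ} {r r' : List Bool} (ha : 0 < a) (ha' : 0 < a')
    (hr : r = [] ∨ (r.head? = some false ∧ 0 < b))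
    (hr' : r' = [] ∨ (r'.head? = some false ∧ 0 < b'))
    (he : replicate a false ++ replicate b true ++ r
        = replicate a' false ++ replicate b' true ++ r') :
    a = a' ∧ b = b' ∧ r = r' := by
  simp only [List.append_assoc] at he
  have haa : a = a' := by
    rcases Nat.le_total a a' with h | h
    · by_contra hne
      have hlt : 0 < a' - a := by omega
      have h2 := rep_cancel h he
      have hh : (replicate b true ++ r).head? = some false := by
        rw [h2]; exact rep_head hlt _ _
      cases b with
      | zero =>
        simp at hh
        have hne2 : r ≠ [] := by intro h0; rw [h0] at hh; simp at hh
        rcases hr with h0 | ⟨_, h0⟩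
        · exact hne2 h0
        · omega
      | succ b0 => simp [replicate_succ] at hh
    · by_contra hne
      have hlt : 0 < a - a' := by omega
      have h2 := rep_cancel h he.symm
      have hh : (replicate b' true ++ r').head? = some false := by
        rw [h2]; exact rep_head hlt _ _
      cases b' with
      | zero =>
        simp at hh
        have hne2 : r' ≠ [] := by intro h0; rw [h0] at hh; simp at hh
        rcases hr' with h0 | ⟨_, h0⟩
        · exact hne2 h0
        · omega
      | succ b0 => simp [replicate_succ] at hh
  subst haa
  have h2 : replicate b true ++ r = replicate b' true ++ r' :=
    List.append_cancel_left he
  obtain ⟨h3, h4⟩ := trues_eq (hr.imp id And.left) (hr'.imp id And.left) h2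
  exact ⟨rfl, h3, h4⟩

/-! ### Validity lemmas -/

lemma isValid_nil (c d : ℕ) : isValid c d [] := by
  intro p s a b he _ _ ha
  rw [List.append_assoc, List.append_assoc] at he
  have := congrArg List.length he
  simp at this
  omega

lemma isValid_extract {c d : ℕ} {a b : ℕ} {r : List Bool}
    (hv : isValid c d (replicate a false ++ replicate b true ++ r))
    (hr : r = [] ∨ r.head? = some false) (ha : 0 < a) : d * b < c * a :=
  hv [] r a b (by simp) (Or.inl rfl) hr ha

lemma isValid_cons_true {c d : ℕ} {w : List Bool} :
    isValid c d (true :: w) ↔ isValid c d w := by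
  constructor
  · intro hv p s a b he hp hs ha
    refine hv (true :: p) s a b (by rw [he]; rfl) (Or.inr ?_) hs ha
    rcases hp with rfl | hp
    · rfl
    · cases p with
      | nil => simp at hp
      | cons x p' => rw [List.getLast?_cons_cons]; exact hp
  · intro hv p s a b he hp hs ha
    cases p with
    | nil =>
      exfalso
      simp only [List.nil_append] at he
      cases a with
      | zero => omega
      | succ a0 => simp [replicate_succ] at he
    | cons x p' =>
      simp only [List.cons_append] at he
      injection he with hx hw
      subst hx
      refine hv p' s a b hw ?_ hs ha
      cases p' with
      | nil => exact Or.inl rfl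
      | cons y p'' =>
        right
        rcases hp with hp | hp
        · simp at hp
        · rw [List.getLast?_cons_cons] at hp; exact hp

/-- the easy direction: validity of the tail -/
lemma isValid_of_append_block {c d : ℕ} {a b : ℕ} {r : List Bool} (ha : 0 < a)
    (hbr : r ≠ [] → 0 < b)
    (hv : isValid c d (replicate a false ++ replicate b true ++ r)) : isValid c d r := by
  intro p s a' b' he hp hs ha'
  refine hv (replicate a false ++ replicate b true ++ p) s a' b'
    (by rw [he]; simp [List.append_assoc]) (Or.inr ?_) hs ha'
  cases p with
  | nil =>
    have hrne : r ≠ [] := by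
      rw [he]
      intro h0
      rw [List.append_assoc, List.append_assoc] at h0
      have := congrArg List.length h0
      simp at this
      omega
    have hb := hbr hrne
    rw [List.append_nil]
    exact rep_last hb _ _
  | cons x p' =>
    rw [List.getLast?_append_of_ne_nil _ (by simp)]
    rcases hp with hp | hp
    · simp at hp
    · exact hp

/-- the hard direction: gluing a block on the left preserves validity -/
lemma isValid_append_block {c d : ℕ} (hc : 0 < c) {a b : ℕ} {r : List Bool}
    (ha : 0 < a) (hab : d * b < c * a)
    (hr : r = [] ∨ (r.head? = some false ∧ 0 < b)) (hvr : isValid c d r) :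
    isValid c d (replicate a false ++ replicate b true ++ r) := by
  intro p s a' b' he hp hs ha'
  simp only [List.append_assoc] at he
  rcases List.append_eq_append_iff.mp he with ⟨t, hp2, ht⟩ | ⟨t, ht1, ht2⟩
  · -- p = replicate a false ++ t, and  replicate b true ++ r = t ++ (rep a' ++ rep b' ++ s)
    rcases List.append_eq_append_iff.mp ht with ⟨u, htu, hru⟩ | ⟨u, htu, hru⟩
    · -- t = replicate b true ++ u,  r = u ++ (rep a' ++ ...)
      refine hvr u s a' b' (by rw [hru]; simp [List.append_assoc]) ?_ hs ha'
      cases u with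
      | nil => exact Or.inl rfl
      | cons y u' =>
        right
        have hpne : p ≠ [] := by
          rw [hp2]; cases a with
          | zero => omega
          | succ a0 => simp [replicate_succ]
        rcases hp with hp | hp
        · exact absurd hp hpne
        · rw [hp2, htu] at hp
          rw [List.getLast?_append_of_ne_nil _ (by simp),
            List.getLast?_append_of_ne_nil _ (by simp)] at hp
          exact hp
    · -- replicate b true = t ++ u, and rep a' ++ rep b' ++ s = u ++ r
      obtain ⟨htr, hur, hlen⟩ := eq_rep_of_pre htu
      cases hu : u.length with
      | succ u0 =>
        exfalso
        have h1 : (replicate a' false ++ (replicate b' true ++ s)).head? = some true := by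
          rw [hru, hur, hu]; exact rep_head (by omega) _ _
        rw [rep_head ha' _ _] at h1
        simp at h1
      | zero =>
        have hunil : u = [] := List.length_eq_zero_iff.mp hu
        rw [hunil, List.nil_append] at hru
        -- r = rep a' ++ rep b' ++ s
        have hrne : r ≠ [] := by
          rw [← hru]
          intro h0
          have := congrArg List.length h0
          simp at this
          omega
        rcases hr with h0 | ⟨hrh, hb⟩
        · exact absurd h0 hrne
        · exact hvr [] s a' b' (by rw [← hru]; simp) (Or.inl rfl) hs ha'
  · -- replicate a false = p ++ t,  rep a' ++ rep b' ++ s = t ++ (rep b true ++ r)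
    obtain ⟨hpr, htr, hlen⟩ := eq_rep_of_pre ht1
    have hpnil : p = [] := by
      rcases hp with hp | hp
      · exact hp
      · exfalso
        have : true ∈ p := List.mem_of_mem_getLast? hp
        rw [hpr] at this
        have := eq_of_mem_replicate this
        simp at this
    rw [hpnil] at hlen
    simp only [List.length_nil, Nat.zero_add] at hlen
    rw [htr, hlen] at ht2
    -- ht2 : rep a' ++ (rep b' ++ s) = rep a ++ (rep b true ++ r)
    rcases Nat.le_total a' a with h | h
    · have h2 := rep_cancel h ht2
      rcases Nat.eq_or_lt_of_le h with rfl | hlt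
      · simp at h2
        obtain ⟨hb, hsr⟩ := trues_eq hs (hr.imp id And.left) h2
        rw [hb]
        exact hab
      · cases b' with
        | zero => simpa using Nat.mul_pos hc ha'
        | succ b0 =>
          exfalso
          have hh := congrArg List.head? h2
          have h0 : 0 < a - a' := by omega
          rw [rep_head h0 _ _] at hh
          simp [replicate_succ] at hh
    · have h2 := rep_cancel h ht2.symm
      rcases Nat.eq_or_lt_of_le h with h3 | hlt
      · subst h3
        simp at h2
        obtain ⟨hb, hsr⟩ := trues_eq (hr.imp id And.left) hs h2
        rw [← hb]
        exact hab
      · exfalso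
        have hh := congrArg List.head? h2
        have h0 : 0 < a' - a := by omega
        rw [rep_head h0 _ _] at hh
        cases b with
        | zero =>
          simp at hh
          have hrne : r ≠ [] := by intro h0; rw [h0] at hh; simp at hh
          rcases hr with h0 | ⟨_, h0⟩
          · exact hrne h0
          · omega
        | succ b0 => simp [replicate_succ] at hh

/-- existence of the maximal-block split -/
lemma exists_split (w : List Bool) :
    ∃ a b r, w = replicate a false ++ replicate b true ++ r ∧
      (r = [] ∨ (r.head? = some false ∧ 0 < b)) ∧ (w.head? = some false → 0 < a) := by
  induction w with
  | nil => exact ⟨0, 0, [], by simp, Or.inl rfl, by simp⟩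
  | cons x w ih =>
    obtain ⟨a, b, r, he, hr, _⟩ := ih
    cases x with
    | false =>
      exact ⟨a + 1, b, r, by simp [he, replicate_succ], hr, fun _ => Nat.succ_pos _⟩
    | true =>
      cases a with
      | zero =>
        refine ⟨0, b + 1, r, by simp [he, replicate_succ], ?_, by simp⟩
        rcases hr with h | ⟨h1, _⟩
        · exact Or.inl h
        · exact Or.inr ⟨h1, Nat.succ_pos _⟩
      | succ a0 =>
        refine ⟨0, 1, replicate (a0 + 1) false ++ replicate b true ++ r,
          by simp [he], Or.inr ⟨by rw [List.append_assoc]; exact rep_head (Nat.succ_pos a0) _ _, Nat.one_pos⟩, by simp⟩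


/-! ### Counting -/

abbrev blkT (c d n : ℕ) := {w : List Bool // w.length = n ∧ isValid c d w ∧ w.head? = some false}

noncomputable def ucnt (c d n : ℕ) : ℕ := Nat.card (blkT c d n)

def b0 (c d n : ℕ) : ℕ := ((Finset.Icc 1 n).filter fun a => d * (n - a) < c * a).card
def bp (c d n : ℕ) : ℕ := ((Finset.Icc 1 (n - 1)).filter fun a => d * (n - a) < c * a).card

instance finLen (n : ℕ) (P : List Bool → Prop) : Finite {w : List Bool // w.length = n ∧ P w} := by
  have h : {w : List Bool | w.length = n ∧ P w} ⊆ {l : List Bool | l.length = n} :=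
    fun w hw => hw.1
  exact Set.Finite.to_subtype ((List.finite_length_eq (α := Bool) n).subset h)

lemma wcount_zero (c d : ℕ) : wcount c d 0 = 1 := by
  haveI : Unique {w : List Bool // w.length = 0 ∧ isValid c d w} :=
    { default := ⟨[], rfl, isValid_nil c d⟩
      uniq := by rintro ⟨w, hw, -⟩; exact Subtype.ext (List.length_eq_zero_iff.mp hw) }
  exact Nat.card_unique

lemma ucnt_zero (c d : ℕ) : ucnt c d 0 = 0 := by
  haveI : IsEmpty (blkT c d 0) :=
    ⟨by rintro ⟨w, hw, -, hh⟩; rw [List.length_eq_zero_iff.mp hw] at hh; simp at hh⟩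
  exact Nat.card_of_isEmpty

open List in
def g1 (c d n : ℕ) :
    ({w : List Bool // w.length = n ∧ isValid c d w} ⊕ blkT c d (n + 1)) →
      {w : List Bool // w.length = n + 1 ∧ isValid c d w}
  | Sum.inl ⟨w, h1, h2⟩ => ⟨true :: w, by simp [h1], isValid_cons_true.mpr h2⟩
  | Sum.inr ⟨w, h1, h2, _⟩ => ⟨w, h1, h2⟩

open List in
lemma g1_bij (c d n : ℕ) : Function.Bijective (g1 c d n) := by
  constructor
  · rintro (⟨w, h1, h2⟩ | ⟨w, h1, h2, h3⟩) (⟨w', h1', h2'⟩ | ⟨w', h1', h2', h3'⟩) hxy <;>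
      simp only [g1, Subtype.mk.injEq] at hxy
    · cases hxy; rfl
    · exfalso; rw [← hxy] at h3'; simp at h3'
    · exfalso; rw [hxy] at h3; simp at h3
    · cases hxy; rfl
  · rintro ⟨w, h1, h2⟩
    cases w with
    | nil => simp at h1
    | cons x t =>
      cases x with
      | true =>
        exact ⟨Sum.inl ⟨t, by simpa using h1, isValid_cons_true.mp h2⟩, rfl⟩
      | false =>
        exact ⟨Sum.inr ⟨false :: t, h1, h2, rfl⟩, rfl⟩

lemma wcount_succ (c d n : ℕ) : wcount c d (n + 1) = wcount c d n + ucnt c d (n + 1) := by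
  have h := Nat.card_eq_of_bijective _ (g1_bij c d n)
  rw [Nat.card_sum] at h
  simpa [wcount, ucnt] using h.symm

abbrev A0 (c d n : ℕ) := {ab : ℕ × ℕ // ab.1 + ab.2 = n ∧ 0 < ab.1 ∧ d * ab.2 < c * ab.1}
abbrev AP (c d k n : ℕ) :=
  {ab : ℕ × ℕ // ab.1 + ab.2 + k = n ∧ 0 < ab.1 ∧ 0 < ab.2 ∧ d * ab.2 < c * ab.1}

lemma card_A0 (c d n : ℕ) : Nat.card (A0 c d n) = b0 c d n := by
  rw [b0, ← Nat.card_eq_finsetCard]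
  apply Nat.card_congr
  refine ⟨fun x => ⟨x.1.1, ?_⟩, fun y => ⟨(y.1, n - y.1), ?_⟩, ?_, ?_⟩
  · obtain ⟨h1, h2, h3⟩ := x.2
    simp only [Finset.mem_filter, Finset.mem_Icc]
    have hb : n - x.1.1 = x.1.2 := by omega
    rw [hb]
    exact ⟨⟨h2, by omega⟩, h3⟩
  · have := y.2
    simp only [Finset.mem_filter, Finset.mem_Icc] at this
    exact ⟨by omega, by omega, this.2⟩
  · rintro ⟨⟨a, b⟩, h1, h2, h3⟩
    exact Subtype.ext (Prod.ext rfl (by simp; omega))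
  · rintro ⟨a, ha⟩
    exact Subtype.ext rfl

lemma card_AP (c d m n : ℕ) : Nat.card (AP c d m (n + 1)) = bp c d (n + 1 - m) := by
  rw [bp, ← Nat.card_eq_finsetCard]
  apply Nat.card_congr
  refine ⟨fun x => ⟨x.1.1, ?_⟩, fun y => ⟨(y.1, n + 1 - m - y.1), ?_⟩, ?_, ?_⟩
  · obtain ⟨h1, h2, h3, h4⟩ := x.2
    simp only [Finset.mem_filter, Finset.mem_Icc]
    have hb : n + 1 - m - x.1.1 = x.1.2 := by omega
    rw [hb]
    exact ⟨⟨h2, by omega⟩, h4⟩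
  · have := y.2
    simp only [Finset.mem_filter, Finset.mem_Icc] at this
    exact ⟨by omega, by omega, by omega, this.2⟩
  · rintro ⟨⟨a, b⟩, h1, h2, h3, h4⟩
    exact Subtype.ext (Prod.ext rfl (by simp; omega))
  · rintro ⟨a, ha⟩
    exact Subtype.ext rfl

open List in
noncomputable def g2 (c d n : ℕ) (hc : 0 < c) :
    (A0 c d (n + 1) ⊕ (Σ m : Fin (n + 1), AP c d m.1 (n + 1) × blkT c d m.1)) →
      blkT c d (n + 1)
  | Sum.inl ⟨⟨a, b⟩, h1, h2, h3⟩ =>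
    ⟨replicate a false ++ replicate b true,
      by simp; omega,
      by simpa using isValid_append_block hc h2 h3 (Or.inl rfl) (isValid_nil c d),
      rep_head h2 _ _⟩
  | Sum.inr ⟨m, ⟨⟨a, b⟩, h1, h2, h3, h4⟩, ⟨w, hw1, hw2, hw3⟩⟩ =>
    ⟨replicate a false ++ replicate b true ++ w,
      by simp; omega,
      isValid_append_block hc h2 h4 (Or.inr ⟨hw3, h3⟩) hw2,
      by rw [List.append_assoc]; exact rep_head h2 _ _⟩

open List in
lemma g2_bij (c d n : ℕ) (hc : 0 < c) : Function.Bijective (g2 c d n hc) := by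
  constructor
  · rintro (⟨⟨a, b⟩, h1, h2, h3⟩ | ⟨m, ⟨⟨a, b⟩, h1, h2, h3, h4⟩, ⟨w, hw1, hw2, hw3⟩⟩)
      (⟨⟨a', b'⟩, h1', h2', h3'⟩ | ⟨m', ⟨⟨a', b'⟩, h1', h2', h3', h4'⟩, ⟨w', hw1', hw2', hw3'⟩⟩)
      hxy <;> simp only [g2, Subtype.mk.injEq] at hxy
    · obtain ⟨rfl, rfl, -⟩ := split_unique h2 h2' (Or.inl rfl) (Or.inl rfl)
        (by simpa using hxy)
      rfl
    · exfalso
      obtain ⟨-, -, hw⟩ := split_unique h2 h2' (Or.inl rfl) (Or.inr ⟨hw3', h3'⟩)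
        (by simpa using hxy)
      rw [← hw] at hw3'; simp at hw3'
    · exfalso
      obtain ⟨-, -, hw⟩ := split_unique h2 h2' (Or.inr ⟨hw3, h3⟩) (Or.inl rfl)
        (by simpa using hxy)
      rw [hw] at hw3; simp at hw3
    · obtain ⟨rfl, rfl, rfl⟩ := split_unique h2 h2' (Or.inr ⟨hw3, h3⟩) (Or.inr ⟨hw3', h3'⟩) hxy
      have hm : m = m' := Fin.val_injective (by rw [← hw1, ← hw1'])
      subst hm
      rfl
  · rintro ⟨w, hlen, hval, hhead⟩
    obtain ⟨a, b, r, he, hr, hha⟩ := exists_split w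
    have ha : 0 < a := hha hhead
    have hab : d * b < c * a := isValid_extract (he ▸ hval) (hr.imp id And.left) ha
    have hlen2 : a + b + r.length = n + 1 := by
      have := congrArg List.length he
      simp at this
      omega
    rcases hr with rfl | ⟨hrh, hb⟩
    · refine ⟨Sum.inl ⟨(a, b), by simpa using hlen2, ha, hab⟩, ?_⟩
      apply Subtype.ext
      simp only [g2]
      rw [he]; simp
    · have hrne : r ≠ [] := by intro h0; rw [h0] at hrh; simp at hrh
      have hvr : isValid c d r := isValid_of_append_block ha (fun _ => hb) (he ▸ hval)
      have hmlt : r.length < n + 1 := by omega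
      refine ⟨Sum.inr ⟨⟨r.length, hmlt⟩, ⟨(a, b), hlen2, ha, hb, hab⟩, ⟨r, rfl, hvr, hrh⟩⟩, ?_⟩
      apply Subtype.ext
      simp only [g2]
      exact he.symm

lemma card_sigma_fin {n : ℕ} (f : Fin n → Type) [∀ i, Finite (f i)] :
    Nat.card (Σ i, f i) = ∑ i, Nat.card (f i) := by
  haveI := fun i => Fintype.ofFinite (f i)
  simp [Nat.card_eq_fintype_card, Fintype.card_sigma]

instance finA0 (c d n : ℕ) : Finite (A0 c d n) := by
  apply Finite.of_injective
    (fun x : A0 c d n =>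
      ((⟨x.1.1, by obtain ⟨h1, -, -⟩ := x.2; omega⟩ : Fin (n + 1)),
       (⟨x.1.2, by obtain ⟨h1, -, -⟩ := x.2; omega⟩ : Fin (n + 1))))
  intro x y hxy
  have h1 : x.1.1 = y.1.1 := congrArg (fun p => p.1.1) hxy
  have h2 : x.1.2 = y.1.2 := congrArg (fun p => p.2.1) hxy
  exact Subtype.ext (Prod.ext h1 h2)

instance finAP (c d k n : ℕ) : Finite (AP c d k n) := by
  apply Finite.of_injective
    (fun x : AP c d k n =>
      ((⟨x.1.1, by obtain ⟨h1, -, -, -⟩ := x.2; omega⟩ : Fin (n + 1)),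
       (⟨x.1.2, by obtain ⟨h1, -, -, -⟩ := x.2; omega⟩ : Fin (n + 1))))
  intro x y hxy
  have h1 : x.1.1 = y.1.1 := congrArg (fun p => p.1.1) hxy
  have h2 : x.1.2 = y.1.2 := congrArg (fun p => p.2.1) hxy
  exact Subtype.ext (Prod.ext h1 h2)

lemma ucnt_succ (c d n : ℕ) (hc : 0 < c) :
    ucnt c d (n + 1)
      = b0 c d (n + 1) + ∑ m ∈ Finset.range (n + 1), bp c d (n + 1 - m) * ucnt c d m := by
  classical
  have h := Nat.card_eq_of_bijective _ (g2_bij c d n hc)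
  rw [Nat.card_sum, card_sigma_fin, card_A0] at h
  have hsum : ∀ i : Fin (n + 1),
      Nat.card (AP c d i.1 (n + 1) × blkT c d i.1) = bp c d (n + 1 - i.1) * ucnt c d i.1 := by
    intro i
    rw [Nat.card_prod, card_AP]
    rfl
  rw [Finset.sum_congr rfl fun i _ => hsum i, Fin.sum_univ_eq_sum_range
    (fun m => bp c d (n + 1 - m) * ucnt c d m)] at h
  exact h.symm


/-! ### Arithmetic -/

def beta (c d n : ℕ) : ℕ := n - d * n / (c + d)

def efun (c d i : ℕ) : ℕ := 1 + i * d / c + i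

def gcnt (c d n : ℕ) : ℕ := ((Finset.range c).filter fun i => efun c d i ≤ n).card

def pcnt (c d n : ℕ) : ℕ := ((Finset.range c).filter fun i => efun c d i = n).card

lemma div_le_self' (d n k : ℕ) (hd : 0 < d) (hk : d ≤ k) : d * n / k ≤ n := by
  calc d * n / k ≤ d * n / d := Nat.div_le_div_left hk hd
  _ = n := Nat.mul_div_cancel_left n hd

lemma b0_eq_beta (c d : ℕ) (hc : 0 < c) (n : ℕ) : b0 c d n = beta c d n := by
  have hcd : 0 < c + d := by omega
  have hfil : (Finset.Icc 1 n).filter (fun a => d * (n - a) < c * a)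
      = Finset.Icc (d * n / (c + d) + 1) n := by
    ext a
    simp only [Finset.mem_filter, Finset.mem_Icc]
    constructor
    · rintro ⟨⟨h1, h2⟩, h3⟩
      refine ⟨?_, h2⟩
      obtain ⟨k, rfl⟩ : ∃ k, n = a + k := ⟨n - a, by omega⟩
      have h3' : d * k < c * a := by
        have hk : a + k - a = k := by omega
        rwa [hk] at h3
      have h4 : d * (a + k) < a * (c + d) := by
        calc d * (a + k) = d * a + d * k := by ring
        _ < d * a + c * a := by omega
        _ = a * (c + d) := by ring
      exact Nat.succ_le_of_lt ((Nat.div_lt_iff_lt_mul hcd).mpr h4)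
    · rintro ⟨h1, h2⟩
      have h0 : d * n / (c + d) < a := Nat.lt_of_succ_le (by simpa [Nat.succ_eq_add_one, Nat.add_comm] using h1)
      have h4 : d * n < a * (c + d) := (Nat.div_lt_iff_lt_mul hcd).mp h0
      refine ⟨⟨le_trans (Nat.le_add_left 1 _) h1, h2⟩, ?_⟩
      obtain ⟨k, rfl⟩ : ∃ k, n = a + k := ⟨n - a, by omega⟩
      have hk : a + k - a = k := by omega
      rw [hk]
      have e1 : d * (a + k) = d * a + d * k := by ring
      have e2 : a * (c + d) = d * a + c * a := by ring
      omega
  rw [b0, beta, hfil, Nat.card_Icc]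
  generalize d * n / (c + d) = t
  omega

lemma beta_add (c d : ℕ) (hd : 0 < d) (m : ℕ) : beta c d (m + (c + d)) = beta c d m + c := by
  have hcd : 0 < c + d := by omega
  have h1 : d * (m + (c + d)) = d * m + d * (c + d) := by ring
  have h2 : d * m / (c + d) ≤ m := div_le_self' d m (c + d) hd (by omega)
  rw [beta, beta, h1, Nat.add_mul_div_right _ _ hcd]
  omega

lemma efun_le_iff (c d : ℕ) (hc : 0 < c) (i n : ℕ) :
    efun c d i ≤ n ↔ i * (c + d) < n * c := by
  have h1 : i * (c + d) / c = i * d / c + i := by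
    rw [show i * (c + d) = i * d + i * c by ring, Nat.add_mul_div_right _ _ hc]
  rw [efun, ← Nat.div_lt_iff_lt_mul hc, h1]
  omega

lemma efun_lt (c d : ℕ) (hc : 0 < c) (hd : 0 < d) {i : ℕ} (hi : i < c) :
    efun c d i < c + d := by
  have h2 : i * (c + d) < (c + d - 1) * c := by
    have h3 : i * (c + d) ≤ (c - 1) * (c + d) := Nat.mul_le_mul_right _ (by omega)
    have h4 : (c - 1) * (c + d) < (c + d - 1) * c := by
      obtain ⟨c0, rfl⟩ : ∃ c0, c = c0 + 1 := ⟨c - 1, by omega⟩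
      obtain ⟨d0, rfl⟩ : ∃ d0, d = d0 + 1 := ⟨d - 1, by omega⟩
      have e1 : (c0 + 1 - 1) * (c0 + 1 + (d0 + 1)) = c0 * c0 + c0 * d0 + 2 * c0 := by
        simp; ring
      have e2 : (c0 + 1 + (d0 + 1) - 1) * (c0 + 1) = c0 * c0 + c0 * d0 + 2 * c0 + d0 + 1 := by
        simp [Nat.add_sub_cancel]; ring
      omega
    omega
  have h5 : efun c d i ≤ c + d - 1 := (efun_le_iff c d hc i _).mpr h2
  omega

lemma gcnt_eq_beta (c d : ℕ) (hc : 0 < c) (hd : 0 < d) {n : ℕ} (hn : n ≤ c + d) :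
    gcnt c d n = beta c d n := by
  have hcd : 0 < c + d := by omega
  have hmod := Nat.div_add_mod (d * n) (c + d)
  set t := d * n / (c + d) with ht
  set r := d * n % (c + d) with hr
  have htn : t ≤ n := div_le_self' d n (c + d) hd (by omega)
  have hrlt : r < c + d := Nat.mod_lt _ hcd
  obtain ⟨u, hu⟩ : ∃ u, n = t + u := ⟨n - t, by omega⟩
  have hdu : d * u = c * t + r := by
    have e4 : d * (t + u) = d * t + d * u := by ring
    have e5 : (c + d) * t = c * t + d * t := by ring
    have e4 : d * n = d * t + d * u := by rw [hu]; ring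
    omega
  have hbc : u ≤ c := by
    by_contra hcon
    push_neg at hcon
    have h10 : d * (c + 1) ≤ d * u := Nat.mul_le_mul_left _ (by omega)
    have h11 : c * (t + 1) ≤ c * d := Nat.mul_le_mul_left _ (by omega)
    have e6 : d * (c + 1) = d * c + d := by ring
    have e7 : c * (t + 1) = c * t + c := by ring
    have e8 : d * c = c * d := by ring
    omega
  have hfil : (Finset.range c).filter (fun i => efun c d i ≤ n) = Finset.range u := by
    have e9 : u * (c + d) = c * u + d * u := by ring
    have e10 : n * c = c * t + c * u := by rw [hu]; ring
    ext i
    simp only [Finset.mem_filter, Finset.mem_range, efun_le_iff c d hc]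
    constructor
    · rintro ⟨hic, hi⟩
      by_contra hcon
      push_neg at hcon
      have h5 : u * (c + d) ≤ i * (c + d) := Nat.mul_le_mul_right _ hcon
      omega
    · intro hi
      refine ⟨by omega, ?_⟩
      have h5 : (i + 1) * (c + d) ≤ u * (c + d) := Nat.mul_le_mul_right _ (by omega)
      have e11 : (i + 1) * (c + d) = i * (c + d) + (c + d) := by ring
      omega
  rw [gcnt, hfil, Finset.card_range, beta, ← ht]
  omega

lemma gcnt_succ (c d n : ℕ) : gcnt c d (n + 1) = gcnt c d n + pcnt c d (n + 1) := by
  classical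
  have hfil : (Finset.range c).filter (fun i => efun c d i ≤ n + 1)
      = (Finset.range c).filter (fun i => efun c d i ≤ n)
        ∪ (Finset.range c).filter (fun i => efun c d i = n + 1) := by
    rw [← Finset.filter_or]
    apply Finset.filter_congr
    intro i _
    constructor
    · intro h; omega
    · intro h; omega
  rw [gcnt, hfil, Finset.card_union_of_disjoint, gcnt, pcnt]
  rw [Finset.disjoint_left]
  intro i hi1 hi2
  simp only [Finset.mem_filter] at hi1 hi2
  omega

lemma pcnt_zero (c d : ℕ) : pcnt c d 0 = 0 := by
  rw [pcnt, Finset.card_eq_zero, Finset.filter_eq_empty_iff]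
  intro i _
  simp [efun]

lemma pcnt_big (c d : ℕ) (hc : 0 < c) (hd : 0 < d) {n : ℕ} (hn : c + d ≤ n) :
    pcnt c d n = 0 := by
  rw [pcnt, Finset.card_eq_zero, Finset.filter_eq_empty_iff]
  intro i hi
  have := efun_lt c d hc hd (Finset.mem_range.mp hi)
  omega

lemma gcnt_full (c d : ℕ) (hc : 0 < c) (hd : 0 < d) : gcnt c d (c + d - 1) = c := by
  rw [gcnt, Finset.filter_true_of_mem, Finset.card_range]
  intro i hi
  have := efun_lt c d hc hd (Finset.mem_range.mp hi)
  omega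

lemma b0_bp (c d : ℕ) (hc : 0 < c) (n : ℕ) : b0 c d (n + 1) = bp c d (n + 1) + 1 := by
  classical
  have hins : Finset.Icc 1 (n + 1) = insert (n + 1) (Finset.Icc 1 n) := by
    ext x
    simp only [Finset.mem_Icc, Finset.mem_insert]
    omega
  rw [b0, hins, Finset.filter_insert, if_pos (by simp; positivity)]
  rw [Finset.card_insert_of_notMem (by simp only [Finset.mem_filter, Finset.mem_Icc]; omega)]
  rw [bp]
  simp

lemma bp_zero (c d : ℕ) : bp c d 0 = 0 := by simp [bp]
lemma bp_one (c d : ℕ) : bp c d 1 = 0 := by simp [bp]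
lemma b0_zero (c d : ℕ) : b0 c d 0 = 0 := by simp [b0]

/-! ### Power series -/

noncomputable def Fs (c d : ℕ) : PowerSeries ℤ := PowerSeries.mk fun n => (wcount c d n : ℤ)
noncomputable def Us (c d : ℕ) : PowerSeries ℤ :=
  PowerSeries.mk fun n => if n = 0 then 1 else (ucnt c d n : ℤ)
noncomputable def B0s (c d : ℕ) : PowerSeries ℤ := PowerSeries.mk fun n => (b0 c d n : ℤ)
noncomputable def Bps (c d : ℕ) : PowerSeries ℤ := PowerSeries.mk fun n => (bp c d n : ℤ)
noncomputable def Gs : PowerSeries ℤ := PowerSeries.mk fun n => if n = 0 then 0 else 1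

lemma coeff_X_pow_mul' (k n : ℕ) (φ : PowerSeries ℤ) :
    (PowerSeries.coeff n) (PowerSeries.X ^ k * φ)
      = if k ≤ n then (PowerSeries.coeff (n - k)) φ else 0 := by
  rcases le_or_gt k n with h | h
  · obtain ⟨m, rfl⟩ : ∃ m, n = m + k := ⟨n - k, by omega⟩
    rw [if_pos h, PowerSeries.coeff_X_pow_mul, Nat.add_sub_cancel]
  · rw [if_neg (by omega), PowerSeries.coeff_mul]
    apply Finset.sum_eq_zero
    rintro ⟨p1, p2⟩ hp
    rw [Finset.HasAntidiagonal.mem_antidiagonal] at hp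
    rw [PowerSeries.coeff_X_pow, if_neg (by simp at hp ⊢; omega), zero_mul]

lemma Ieq1 (c d : ℕ) : (1 - PowerSeries.X) * Fs c d = Us c d := by
  apply PowerSeries.ext
  intro n
  rw [sub_mul, one_mul, map_sub]
  cases n with
  | zero =>
    simp [Fs, Us, wcount_zero, PowerSeries.coeff_zero_eq_constantCoeff, map_mul]
  | succ k =>
    rw [PowerSeries.coeff_succ_X_mul]
    simp only [Fs, Us, PowerSeries.coeff_mk, if_neg (Nat.succ_ne_zero k)]
    have h := wcount_succ c d k
    push_cast [h]
    ring

lemma Ieq3a (c d : ℕ) (hc : 0 < c) : B0s c d = Bps c d + Gs := by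
  apply PowerSeries.ext
  intro n
  rw [map_add]
  cases n with
  | zero => simp [B0s, Bps, Gs, b0_zero, bp_zero]
  | succ k =>
    simp only [B0s, Bps, Gs, PowerSeries.coeff_mk, if_neg (Nat.succ_ne_zero k)]
    rw [b0_bp c d hc k]
    push_cast
    ring

lemma Ieq3b : (1 - PowerSeries.X) * Gs = (PowerSeries.X : PowerSeries ℤ) := by
  apply PowerSeries.ext
  intro n
  rw [sub_mul, one_mul, map_sub]
  cases n with
  | zero => simp [Gs, PowerSeries.coeff_zero_eq_constantCoeff, map_mul]
  | succ k =>
    rw [PowerSeries.coeff_succ_X_mul]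
    cases k with
    | zero => simp [Gs, PowerSeries.coeff_X]
    | succ k2 => simp [Gs, PowerSeries.coeff_X]

lemma Ieq2 (c d : ℕ) (hc : 0 < c) :
    Us c d = (1 - Bps c d + B0s c d) + Bps c d * Us c d := by
  apply PowerSeries.ext
  intro n
  rw [map_add, map_add, map_sub, PowerSeries.coeff_mul,
    Finset.Nat.sum_antidiagonal_eq_sum_range_succ_mk]
  cases n with
  | zero =>
    simp [Us, Bps, B0s, bp_zero, b0_zero]
  | succ m =>
    simp only [Us, Bps, B0s, PowerSeries.coeff_mk, PowerSeries.coeff_one,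
      if_neg (Nat.succ_ne_zero m)]
    rw [Finset.sum_range_succ]
    have hstep : ∑ k ∈ Finset.range (m + 1),
          (bp c d k : ℤ) * (if m + 1 - k = 0 then (1 : ℤ) else (ucnt c d (m + 1 - k) : ℤ))
        = ∑ k ∈ Finset.range (m + 1), (bp c d k : ℤ) * (ucnt c d (m + 1 - k) : ℤ) := by
      apply Finset.sum_congr rfl
      intro k hk
      rw [Finset.mem_range] at hk
      rw [if_neg (by omega)]
    rw [hstep]
    have hS : ∑ mm ∈ Finset.range (m + 1), (bp c d (m + 1 - mm) : ℤ) * (ucnt c d mm : ℤ)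
        = ∑ k ∈ Finset.range (m + 1), (bp c d k : ℤ) * (ucnt c d (m + 1 - k) : ℤ) := by
      rw [Finset.sum_range_succ' (fun mm => (bp c d (m + 1 - mm) : ℤ) * (ucnt c d mm : ℤ)) m]
      rw [Finset.sum_range_succ' (fun k => (bp c d k : ℤ) * (ucnt c d (m + 1 - k) : ℤ)) m]
      simp only [ucnt_zero, bp_zero, Nat.cast_zero, mul_zero, zero_mul, add_zero]
      rw [← Finset.sum_range_reflect
        (fun j => (bp c d (j + 1) : ℤ) * (ucnt c d (m + 1 - (j + 1)) : ℤ)) m]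
      apply Finset.sum_congr rfl
      intro j hj
      rw [Finset.mem_range] at hj
      rw [show m - 1 - j + 1 = m - j by omega, show m + 1 - (m - j) = j + 1 by omega,
        show m + 1 - (j + 1) = m - j by omega]
    have hcomb := ucnt_succ c d m hc
    have hcast : (ucnt c d (m + 1) : ℤ)
        = (b0 c d (m + 1) : ℤ)
          + ∑ mm ∈ Finset.range (m + 1), (bp c d (m + 1 - mm) : ℤ) * (ucnt c d mm : ℤ) := by
      rw [hcomb]
      push_cast
      ring
    rw [hcast, hS, Nat.sub_self]
    norm_num
    ring

lemma Ieq4 (c d : ℕ) (hc : 0 < c) (hd : 0 < d) :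
    (1 - PowerSeries.X) * ((1 - PowerSeries.X ^ (c + d)) * B0s c d)
      = ∑ i ∈ Finset.range c, (PowerSeries.X : PowerSeries ℤ) ^ (1 + i * d / c + i) := by
  have hexp : (1 - PowerSeries.X) * ((1 - PowerSeries.X ^ (c + d)) * B0s c d)
      = B0s c d - PowerSeries.X ^ 1 * B0s c d - PowerSeries.X ^ (c + d) * B0s c d
        + PowerSeries.X ^ (c + d + 1) * B0s c d := by ring
  rw [hexp]
  apply PowerSeries.ext
  intro n
  rw [map_add, map_sub, map_sub, coeff_X_pow_mul', coeff_X_pow_mul', coeff_X_pow_mul', map_sum]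
  have hRHS : ∑ i ∈ Finset.range c,
      (PowerSeries.coeff n) ((PowerSeries.X : PowerSeries ℤ) ^ (1 + i * d / c + i))
      = (pcnt c d n : ℤ) := by
    have h1 : ∀ i ∈ Finset.range c,
        (PowerSeries.coeff n) ((PowerSeries.X : PowerSeries ℤ) ^ (1 + i * d / c + i))
          = if efun c d i = n then (1 : ℤ) else 0 := by
      intro i _
      rw [PowerSeries.coeff_X_pow]
      simp only [efun]
      by_cases h : n = 1 + i * d / c + i
      · rw [if_pos h]; exact (if_pos h.symm).symm
      · rw [if_neg h]; exact (if_neg (fun hh => h hh.symm)).symm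
    rw [Finset.sum_congr rfl h1, pcnt]
    exact Finset.sum_boole _ _
  rw [hRHS]
  simp only [B0s, PowerSeries.coeff_mk, b0_eq_beta c d hc]
  rcases Nat.eq_zero_or_pos n with rfl | hn
  · simp [beta, pcnt_zero]
  rcases lt_trichotomy n (c + d) with hlt | heq | hgt
  · rw [if_pos (by omega : 1 ≤ n), if_neg (by omega), if_neg (by omega)]
    have h1 : gcnt c d n = gcnt c d (n - 1) + pcnt c d n := by
      have h := gcnt_succ c d (n - 1)
      rwa [show n - 1 + 1 = n by omega] at h
    have h2 := gcnt_eq_beta c d hc hd (le_of_lt hlt)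
    have h3 := gcnt_eq_beta c d hc hd (show n - 1 ≤ c + d by omega)
    rw [← h2, ← h3, h1]
    push_cast
    ring
  · subst heq
    rw [if_pos (by omega : 1 ≤ c + d), if_pos le_rfl, if_neg (by omega)]
    have h1 : beta c d (c + d - (c + d)) = 0 := by simp [beta]
    have h2 : beta c d (c + d) = c := by
      have h := beta_add c d hd 0
      simpa [beta] using h
    have h3 : beta c d (c + d - 1) = c := by
      rw [← gcnt_eq_beta c d hc hd (by omega)]
      exact gcnt_full c d hc hd
    have h4 : pcnt c d (c + d) = 0 := pcnt_big c d hc hd le_rfl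
    rw [h1, h2, h3, h4]
    push_cast
    ring
  · rw [if_pos (by omega : 1 ≤ n), if_pos (by omega), if_pos (by omega)]
    have h1 : beta c d n = beta c d (n - (c + d)) + c := by
      have h := beta_add c d hd (n - (c + d))
      rwa [show n - (c + d) + (c + d) = n by omega] at h
    have h2 : beta c d (n - 1) = beta c d (n - (c + d + 1)) + c := by
      have h := beta_add c d hd (n - (c + d) - 1)
      rwa [show n - (c + d) - 1 + (c + d) = n - 1 by omega,
        show n - (c + d) - 1 = n - (c + d + 1) by omega] at h
    have h4 : pcnt c d n = 0 := pcnt_big c d hc hd (by omega)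
    rw [h1, h2, h4]
    push_cast
    ring

end Stmt10Aux

theorem stmt10 (c d : ℕ) (hc : 0 < c) (hd : 0 < d) (hcd : Nat.Coprime c d) :
    (1 - PowerSeries.X) *
        ((1 : PowerSeries ℤ) - PowerSeries.X ^ (c + d)
          - ∑ i ∈ Finset.range c, PowerSeries.X ^ (1 + i * d / c + i)) *
        PowerSeries.mk (fun n => (wcount c d n : ℤ)) =
      1 - PowerSeries.X ^ (c + d) := by
  have hI1 := Stmt10Aux.Ieq1 c d
  have hI2 := Stmt10Aux.Ieq2 c d hc
  have hI4 := Stmt10Aux.Ieq4 c d hc hd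
  have hI3 : (1 - PowerSeries.X) * Stmt10Aux.Bps c d + PowerSeries.X
      = (1 - PowerSeries.X) * Stmt10Aux.B0s c d := by
    linear_combination (-1 : PowerSeries ℤ) * Stmt10Aux.Ieq3b
      - (1 - PowerSeries.X) * (Stmt10Aux.Ieq3a c d hc)
  have hF : PowerSeries.mk (fun n => (wcount c d n : ℤ)) = Stmt10Aux.Fs c d := rfl
  rw [hF]
  linear_combination
    (1 - PowerSeries.X ^ (c + d)
        - ∑ i ∈ Finset.range c, (PowerSeries.X : PowerSeries ℤ) ^ (1 + i * d / c + i)) * hI1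
      + Stmt10Aux.Us c d * hI4
      + (1 - PowerSeries.X ^ (c + d)) *
          ((1 - PowerSeries.X) * hI2 + (Stmt10Aux.Us c d - 1) * hI3)
end

section
/- For q = 1/k with k a positive integer, the number w_n of binary words of length n whose maximal factors 0^a 1^b with a > 0 satisfy a > kb obeys w_n = w_{n−1} + w_{n−(k+1)} for n ≥ k+1, with w_j = j+1 for 0 ≤ j ≤ k. -/
def WA (k : ℕ) : ℕ ⊕ ℕ → List Bool → Prop
  | Sum.inl _, [] => True
  | Sum.inr c, [] => c = 0
  | Sum.inl b, true :: v => WA k (Sum.inl (b+1)) v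
  | Sum.inl b, false :: v => WA k (Sum.inr (k*b)) v
  | Sum.inr c, true :: v => c = 0 ∧ WA k (Sum.inl 1) v
  | Sum.inr 0, false :: v => WA k (Sum.inr 0) v
  | Sum.inr (c+1), false :: v => WA k (Sum.inr c) v

variable {k b c : ℕ} {v : List Bool}

@[simp] lemma WA_inl_nil : WA k (Sum.inl b) [] := trivial
@[simp] lemma WA_inr_nil : WA k (Sum.inr c) [] ↔ c = 0 := by cases c <;> simp [WA]
@[simp] lemma WA_inl_true : WA k (Sum.inl b) (true :: v) ↔ WA k (Sum.inl (b+1)) v := Iff.rfl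
@[simp] lemma WA_inl_false : WA k (Sum.inl b) (false :: v) ↔ WA k (Sum.inr (k*b)) v := Iff.rfl
@[simp] lemma WA_inr_true : WA k (Sum.inr c) (true :: v) ↔ c = 0 ∧ WA k (Sum.inl 1) v := by
  cases c <;> simp [WA]
@[simp] lemma WA_inr0_false : WA k (Sum.inr 0) (false :: v) ↔ WA k (Sum.inr 0) v := Iff.rfl
@[simp] lemma WA_inrS_false : WA k (Sum.inr (c+1)) (false :: v) ↔ WA k (Sum.inr c) v := Iff.rfl

lemma WA_ones (c : ℕ) : ∀ (b : ℕ) (x : List Bool),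
    WA k (Sum.inl c) (List.replicate b true ++ x) ↔ WA k (Sum.inl (c+b)) x := by
  intro b
  induction b generalizing c with
  | zero => simp
  | succ b ih =>
    intro x
    rw [List.replicate_succ, List.cons_append, WA_inl_true, ih]
    ring_nf

lemma WA_debt_le : ∀ (j m : ℕ) (r : List Bool), WA k (Sum.inr m) (List.replicate j false ++ r) →
    (r = [] ∨ r.head? = some true) → m ≤ j := by
  intro j
  induction j with
  | zero =>
    intro m r h hr
    rcases hr with rfl | hr
    · simpa using h
    · cases r with
      | nil => simp at hr
      | cons a r =>
        simp at hr; subst hr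
        simp at h; omega
  | succ j ih =>
    intro m r h hr
    cases m with
    | zero => omega
    | succ m =>
      rw [List.replicate_succ, List.cons_append, WA_inrS_false] at h
      exact Nat.succ_le_succ (ih m r h hr)

lemma WA_debt_len : ∀ (y : List Bool) (m : ℕ), WA k (Sum.inr m) y → m ≤ y.length := by
  intro y
  induction y with
  | nil => intro m h; simp at h; omega
  | cons a y ih =>
    intro m h
    cases a
    · cases m with
      | zero => simp
      | succ m => rw [WA_inrS_false] at h; simpa using ih m h
    · rw [WA_inr_true] at h; simp [h.1]

lemma WA_zeros_strip : ∀ (j : ℕ) (x : List Bool),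
    WA k (Sum.inr 0) (List.replicate j false ++ x) ↔ WA k (Sum.inr 0) x := by
  intro j
  induction j with
  | zero => simp
  | succ j ih => intro x; rw [List.replicate_succ, List.cons_append, WA_inr0_false, ih]

lemma WA_inr0_iff_inl0 : WA k (Sum.inr 0) v ↔ WA k (Sum.inl 0) v := by
  cases v with
  | nil => simp
  | cons a v => cases a <;> simp

lemma WA_debt_consume : ∀ (j m : ℕ) (x : List Bool),
    WA k (Sum.inr (m + j)) (List.replicate j false ++ x) ↔ WA k (Sum.inr m) x := by
  intro j
  induction j with
  | zero => simp
  | succ j ih =>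
    intro m x
    rw [List.replicate_succ, List.cons_append, show m + (j+1) = (m+j)+1 from rfl,
      WA_inrS_false, ih]

lemma WA_falses_strip (j : ℕ) (x : List Bool) :
    WA k (Sum.inl 0) (List.replicate j false ++ x) ↔ WA k (Sum.inl 0) x := by
  cases j with
  | zero => simp
  | succ j =>
    rw [List.replicate_succ, List.cons_append, WA_inl_false, Nat.mul_zero,
      WA_zeros_strip, WA_inr0_iff_inl0]

lemma WA_prefix : ∀ (t : List Bool) (σ : ℕ ⊕ ℕ) (x : List Bool), WA k σ (t ++ x) →
    ∃ σ', WA k σ' x := by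
  intro t
  induction t with
  | nil => exact fun σ x h => ⟨σ, h⟩
  | cons a t ih =>
    intro σ x h
    rcases σ with b | c
    · cases a
      · exact ih _ _ (by rwa [List.cons_append, WA_inl_false] at h)
      · exact ih _ _ (by rwa [List.cons_append, WA_inl_true] at h)
    · cases a
      · cases c with
        | zero => exact ih _ _ (by rwa [List.cons_append, WA_inr0_false] at h)
        | succ c => exact ih _ _ (by rwa [List.cons_append, WA_inrS_false] at h)
      · rw [List.cons_append, WA_inr_true] at h
        exact ih _ _ h.2

lemma WA_inl_zeros (c a : ℕ) (r : List Bool) (ha : 0 < a) (hr : r = [] ∨ r.head? = some true)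
    (h : WA k (Sum.inl c) (List.replicate a false ++ r)) : k * c < a := by
  obtain ⟨a, rfl⟩ : ∃ a', a = a' + 1 := ⟨a - 1, by omega⟩
  rw [List.replicate_succ, List.cons_append, WA_inl_false] at h
  have := WA_debt_le a (k*c) r h hr
  omega

lemma WA_main1 (σ : ℕ ⊕ ℕ) (b a : ℕ) (r : List Bool) (ha : 0 < a)
    (hr : r = [] ∨ r.head? = some true)
    (h : WA k σ (List.replicate b true ++ List.replicate a false ++ r)) : k * b < a := by
  cases b with
  | zero => simpa using ha
  | succ b =>
    rw [List.replicate_succ, List.cons_append, List.cons_append] at h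
    have key : ∀ c : ℕ, 1 ≤ c →
        WA k (Sum.inl c) (List.replicate b true ++ (List.replicate a false ++ r)) →
        k * (b+1) < a := by
      intro c hc hw
      rw [WA_ones] at hw
      have h2 := WA_inl_zeros (c+b) a r ha hr hw
      have : k * (b+1) ≤ k * (c+b) := Nat.mul_le_mul_left k (by omega)

      omega
    rcases σ with c | d
    · rw [WA_inl_true, List.append_assoc] at h
      exact key (c+1) (by omega) h
    · rw [List.append_assoc, WA_inr_true] at h
      exact key 1 (by omega) h.2

/-- reversed-word form of the validity condition -/
def Pv (k : ℕ) (v : List Bool) : Prop :=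
  ∀ t r : List Bool, ∀ b a : ℕ,
    v = t ++ List.replicate b true ++ List.replicate a false ++ r →
    (t = [] ∨ t.getLast? = some false) →
    (r = [] ∨ r.head? = some true) →
    0 < a → k * b < a

lemma WA_to_Pv (h : WA k (Sum.inl 0) v) : Pv k v := by
  intro t r b a heq _ hr ha
  rw [heq] at h
  simp only [List.append_assoc] at h
  obtain ⟨σ', hσ'⟩ := WA_prefix t _ _ h
  rw [← List.append_assoc] at hσ'
  exact WA_main1 σ' b a r ha hr hσ'

lemma Pv_iff_isValid (w : List Bool) : isValid 1 k w ↔ Pv k w.reverse := by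
  constructor
  · intro h t r b a heq ht hr ha
    have hw : w = r.reverse ++ List.replicate a false ++ List.replicate b true ++ t.reverse := by
      have := congrArg List.reverse heq
      simpa [List.reverse_append, List.reverse_replicate, List.append_assoc] using this
    have hp : r.reverse = [] ∨ r.reverse.getLast? = some true := by
      rcases hr with rfl | hr
      · exact Or.inl rfl
      · exact Or.inr (by rw [List.getLast?_reverse]; exact hr)
    have hs : t.reverse = [] ∨ t.reverse.head? = some false := by
      rcases ht with rfl | ht
      · exact Or.inl rfl
      · exact Or.inr (by rw [List.head?_reverse]; exact ht)
    have := h r.reverse t.reverse a b hw hp hs ha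
    omega
  · intro h p s a b heq hp hs ha
    have hv : w.reverse = s.reverse ++ List.replicate b true ++ List.replicate a false
        ++ p.reverse := by
      rw [heq]
      simp [List.reverse_append, List.reverse_replicate, List.append_assoc]
    have ht : s.reverse = [] ∨ s.reverse.getLast? = some false := by
      rcases hs with rfl | hs
      · exact Or.inl rfl
      · exact Or.inr (by rw [List.getLast?_reverse]; exact hs)
    have hr : p.reverse = [] ∨ p.reverse.head? = some true := by
      rcases hp with rfl | hp
      · exact Or.inl rfl
      · exact Or.inr (by rw [List.head?_reverse]; exact hp)
    have := h s.reverse p.reverse b a hv ht hr ha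
    omega

lemma head_dropWhile (p : Bool → Bool) : ∀ (l : List Bool) {a : Bool} {t : List Bool},
    l.dropWhile p = a :: t → p a = false := by
  intro l
  induction l with
  | nil => intro a t h; simp [List.dropWhile] at h
  | cons x xs ih =>
    intro a t h
    rw [List.dropWhile_cons] at h
    split at h
    · exact ih h
    · cases h; rename_i hx; simpa using hx

lemma takeWhile_id_eq (u : List Bool) :
    u.takeWhile id = List.replicate (u.takeWhile id).length true :=
  List.eq_replicate_length.mpr (fun b hb => by simpa using List.mem_takeWhile_imp hb)

lemma takeWhile_not_eq (u : List Bool) :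
    u.takeWhile (fun x => !x) = List.replicate (u.takeWhile (fun x => !x)).length false :=
  List.eq_replicate_length.mpr (fun b hb => by simpa using List.mem_takeWhile_imp hb)

lemma dropWhile_id_cond (u : List Bool) :
    u.dropWhile id = [] ∨ (u.dropWhile id).head? = some false := by
  cases h : u.dropWhile id with
  | nil => exact Or.inl rfl
  | cons a t =>
    refine Or.inr ?_
    have := head_dropWhile id u h
    simp at this
    simp [this]

lemma dropWhile_not_cond (u : List Bool) :
    u.dropWhile (fun x => !x) = [] ∨ (u.dropWhile (fun x => !x)).head? = some true := by
  cases h : u.dropWhile (fun x => !x) with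
  | nil => exact Or.inl rfl
  | cons a t =>
    refine Or.inr ?_
    have := head_dropWhile _ u h
    simp at this
    simp [this]

lemma last_cons_false (t : List Bool) (h : t = [] ∨ t.getLast? = some false) :
    (false :: t).getLast? = some false := by
  cases t with
  | nil => rfl
  | cons a t =>
    rcases h with h | h
    · simp at h
    · rwa [List.getLast?_cons_cons]

lemma getLast?_replicate_succ (n : ℕ) (a : Bool) :
    (List.replicate (n+1) a).getLast? = some a := by
  rw [List.replicate_succ' (n := n) (a := a), List.getLast?_concat]

lemma last_append_zeros (x t : List Bool) (a : ℕ) (ha : 0 < a)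
    (ht : t = [] ∨ t.getLast? = some false) :
    (x ++ List.replicate a false ++ t).getLast? = some false := by
  rcases ht with rfl | ht
  · obtain ⟨a, rfl⟩ : ∃ a', a = a' + 1 := ⟨a - 1, by omega⟩
    simp [List.getLast?_append, getLast?_replicate_succ]
  · cases t with
    | nil => simp at ht
    | cons b t => simp [List.getLast?_append, ht]

lemma Pv_to_WA : ∀ (N : ℕ) (v : List Bool), v.length ≤ N → Pv k v → WA k (Sum.inl 0) v := by
  intro N
  induction N with
  | zero =>
    intro v hv _
    obtain rfl : v = [] := List.length_eq_zero_iff.mp (by omega)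
    simp
  | succ N ih =>
    intro v hv hpv
    cases v with
    | nil => simp
    | cons x v' =>
      cases x
      · -- leading false
        rw [WA_inl_false, Nat.mul_zero, WA_inr0_iff_inl0]
        refine ih v' (by simpa using hv) ?_
        intro t r b a heq ht hr ha
        exact hpv (false :: t) r b a (by rw [heq]; simp)
          (Or.inr (last_cons_false t ht)) hr ha
      · -- leading true
        have hsplit : v' = v'.takeWhile id ++ v'.dropWhile id :=
          (List.takeWhile_append_dropWhile (p := id) (l := v')).symm
        have htwr := takeWhile_id_eq v'
        set m := (v'.takeWhile id).length with hm
        cases hdwe : v'.dropWhile id with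
        | nil =>
          have hv' : (true :: v') = List.replicate (m + 1) true := by
            rw [List.replicate_succ]
            rw [hsplit, hdwe, List.append_nil]
            rw [← htwr]
          rw [hv']
          have := (WA_ones (k := k) 0 (m+1) ([] : List Bool)).mpr (by simp)
          simpa using this
        | cons c2 y =>
          have hc2 : c2 = false := by
            have := head_dropWhile id v' hdwe
            simpa using this
          subst hc2
          set dw := v'.dropWhile id with hdw
          have hdsplit : dw = List.replicate (dw.takeWhile (fun x => !x)).length false
              ++ dw.dropWhile (fun x => !x) := by
            conv_lhs => rw [← List.takeWhile_append_dropWhile (p := (fun x => !x)) (l := dw)]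
            rw [← takeWhile_not_eq]
          set az := (dw.takeWhile (fun x => !x)).length with haz'
          set r := dw.dropWhile (fun x => !x) with hr'
          have hr : r = [] ∨ r.head? = some true := dropWhile_not_cond dw
          have haz : 0 < az := by
            rw [haz', hdwe]
            simp [List.takeWhile_cons]
          have hveq : true :: v' = [] ++ List.replicate (m+1) true
              ++ List.replicate az false ++ r := by
            rw [List.nil_append, List.replicate_succ, List.cons_append]
            rw [List.cons_append]
            congr 1
            rw [← htwr, List.append_assoc, ← hdsplit, ← hsplit]
          have key : k * (m + 1) < az :=
            hpv [] r (m+1) az hveq (Or.inl rfl) hr haz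
          have hlen : v'.length = m + az + r.length := by
            conv_lhs => rw [hsplit, hdsplit]
            simp [← haz']
            omega
          rw [WA_inl_true]
          rw [hsplit, hdsplit, htwr, WA_ones]
          have h1m : 0 + 1 + m = m + 1 := by omega
          rw [h1m]
          obtain ⟨az2, haze⟩ : ∃ a', az = a' + 1 := ⟨az - 1, by omega⟩
          rw [haze, List.replicate_succ, List.cons_append, WA_inl_false]
          have haz2 : az2 = k * (m+1) + (az2 - k * (m+1)) := by omega
          rw [haz2, List.replicate_add, List.append_assoc]
          have hcons := WA_debt_consume (k := k) (k * (m+1)) 0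
            (List.replicate (az2 - k * (m+1)) false ++ r)
          rw [Nat.zero_add] at hcons
          rw [hcons, WA_zeros_strip, WA_inr0_iff_inl0]
          refine ih r (by simp only [List.length_cons] at hv; omega) ?_
          intro t r2 b a heq ht hr2 ha
          refine hpv (List.replicate (m+1) true ++ List.replicate az false ++ t)
            r2 b a ?_ (Or.inr (last_append_zeros _ t az haz ht)) hr2 ha
          rw [hveq, heq]
          simp [List.append_assoc]

lemma valid_iff_WA (w : List Bool) : isValid 1 k w ↔ WA k (Sum.inl 0) w.reverse := by
  constructor
  · intro h
    exact Pv_to_WA w.reverse.length w.reverse le_rfl ((Pv_iff_isValid w).mp h)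
  · intro h
    exact (Pv_iff_isValid w).mpr (WA_to_Pv h)

def Vn (k n : ℕ) := {v : List Bool // v.length = n ∧ WA k (Sum.inl 0) v}

instance VnFinite (k n : ℕ) : Finite (Vn k n) := by
  have h : Finite {l : List Bool // l.length = n} := (List.finite_length_eq Bool n).to_subtype
  exact Finite.of_injective (fun v : Vn k n => (⟨v.1, v.2.1⟩ : {l : List Bool // l.length = n}))
    (fun a b hab => by apply Subtype.ext; have := congrArg Subtype.val hab; simpa using this)

instance wcountFinite (k n : ℕ) : Finite {w : List Bool // w.length = n ∧ isValid 1 k w} := by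
  have h : Finite {l : List Bool // l.length = n} := (List.finite_length_eq Bool n).to_subtype
  exact Finite.of_injective
    (fun v : {w : List Bool // w.length = n ∧ isValid 1 k w} =>
      (⟨v.1, v.2.1⟩ : {l : List Bool // l.length = n}))
    (fun a b hab => by apply Subtype.ext; have := congrArg Subtype.val hab; simpa using this)

def revEquiv (k n : ℕ) : {w : List Bool // w.length = n ∧ isValid 1 k w} ≃ Vn k n where
  toFun w := ⟨w.1.reverse, by simp [w.2.1], (valid_iff_WA w.1).mp w.2.2⟩
  invFun v := ⟨v.1.reverse, by simp [v.2.1], (valid_iff_WA v.1.reverse).mpr (by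
    rw [List.reverse_reverse]; exact v.2.2)⟩
  left_inv w := Subtype.ext (by simp)
  right_inv v := Subtype.ext (by simp)

lemma wcount_eq_card (k n : ℕ) : wcount 1 k n = Nat.card (Vn k n) :=
  Nat.card_congr (revEquiv k n)

lemma WA_short (hk : 1 ≤ k) (v : List Bool) (hlen : v.length ≤ k) (h : WA k (Sum.inl 0) v) :
    ∃ i m : ℕ, v = List.replicate i false ++ List.replicate m true := by
  have hsplit : v = v.takeWhile (fun x => !x) ++ v.dropWhile (fun x => !x) :=
    (List.takeWhile_append_dropWhile (p := _) (l := v)).symm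
  set i := (v.takeWhile (fun x => !x)).length with hi
  set r := v.dropWhile (fun x => !x) with hrdef
  have htw : v.takeWhile (fun x => !x) = List.replicate i false := takeWhile_not_eq v
  have hr : r = [] ∨ r.head? = some true := dropWhile_not_cond v
  have hwr : WA k (Sum.inl 0) r := by
    rw [hsplit, htw, WA_falses_strip] at h
    exact h
  have hrsplit : r = r.takeWhile id ++ r.dropWhile id :=
    (List.takeWhile_append_dropWhile (p := id) (l := r)).symm
  set m := (r.takeWhile id).length with hm
  have hrtw : r.takeWhile id = List.replicate m true := takeWhile_id_eq r
  cases hdw : r.dropWhile id with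
  | nil =>
    refine ⟨i, m, ?_⟩
    rw [hsplit, htw]
    congr 1
    rw [hrsplit, hdw, List.append_nil, hrtw]
  | cons c2 y =>
    exfalso
    have hc2 : c2 = false := by simpa using head_dropWhile id r hdw
    subst hc2
    have hm1 : 1 ≤ m := by
      rcases hr with hre0 | hr
      · rw [hre0] at hdw; simp [List.dropWhile] at hdw
      · by_contra hm0
        have : m = 0 := by omega
        have : r.takeWhile id = [] := by rw [hrtw, this]; rfl
        have hre : r = false :: y := by
          conv_lhs => rw [hrsplit]
          rw [this, hdw, List.nil_append]
        rw [hre] at hr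
        simp at hr
    rw [hrsplit, hrtw, hdw, WA_ones, WA_inl_false] at hwr
    have hdl := WA_debt_len y (k * (0 + m)) hwr
    have hkm : k ≤ k * (0 + m) := Nat.le_mul_of_pos_right k (by omega)
    have hlv : v.length = i + r.length := by rw [hsplit]; simp [htw]
    have hrl : r.length = m + 1 + y.length := by
      conv_lhs => rw [hrsplit]
      rw [hrtw, hdw]
      simp
      omega
    omega

def finEquiv (j : ℕ) (hk : 1 ≤ k) (hj : j ≤ k) : Fin (j+1) ≃ Vn k j where
  toFun i := ⟨List.replicate i.1 false ++ List.replicate (j - i.1) true,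
    by have := i.2; simp; omega,
    by
      rw [WA_falses_strip]
      have := (WA_ones (k := k) 0 (j - i.1) ([] : List Bool)).mpr (by simp)
      simpa using this⟩
  invFun v := ⟨v.1.count false, by
    have h1 := List.count_le_length (a := false) (l := v.1)
    have := v.2.1
    omega⟩
  left_inv i := by
    apply Fin.ext
    simp [List.count_append, List.count_replicate]
  right_inv v := by
    apply Subtype.ext
    obtain ⟨i, m, hv⟩ := WA_short hk v.1 (le_of_eq (v.2.1.trans rfl) |>.trans hj) v.2.2
    have hcnt : v.1.count false = i := by rw [hv]; simp [List.count_append, List.count_replicate]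
    have hlen : i + m = j := by
      have := v.2.1
      rw [hv] at this
      simpa using this
    show List.replicate (List.count false v.1) false
      ++ List.replicate (j - List.count false v.1) true = v.1
    rw [hcnt, hv, show j - i = m by omega]

lemma wcount_base (hk : 1 ≤ k) (j : ℕ) (hj : j ≤ k) : wcount 1 k j = j + 1 := by
  rw [wcount_eq_card, ← Nat.card_congr (finEquiv j hk hj)]
  simp

lemma WA_debt_split : ∀ (c : ℕ) (y : List Bool), WA k (Sum.inr c) y →
    ∃ y₂, y = List.replicate c false ++ y₂ ∧ WA k (Sum.inr 0) y₂ := by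
  intro c
  induction c with
  | zero => intro y h; exact ⟨y, by simp, h⟩
  | succ c ih =>
    intro y h
    cases y with
    | nil => simp at h
    | cons a y' =>
      cases a
      · rw [WA_inrS_false] at h
        obtain ⟨y₂, hy₂, hw⟩ := ih y' h
        exact ⟨y₂, by rw [List.replicate_succ, List.cons_append, hy₂], hw⟩
      · rw [WA_inr_true] at h
        omega

lemma tw_replicate_true (b : ℕ) : (List.replicate b true).takeWhile id = List.replicate b true
    ∧ (List.replicate b true).dropWhile id = [] := by
  induction b with
  | zero => simp
  | succ b ih => simpa [List.replicate_succ, List.takeWhile_cons, List.dropWhile_cons] using ih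

lemma tdw_ones_append (b : ℕ) (z : List Bool) (hz : z.head? = some false) :
    (List.replicate b true ++ z).takeWhile id = List.replicate b true
    ∧ (List.replicate b true ++ z).dropWhile id = z := by
  induction b with
  | zero =>
    cases z with
    | nil => simp at hz
    | cons a z' =>
      simp at hz
      subst hz
      simp [List.takeWhile_cons, List.dropWhile_cons]
  | succ b ih =>
    simpa [List.replicate_succ, List.takeWhile_cons, List.dropWhile_cons] using ih

lemma drop_replicate_append (j c : ℕ) (x : List Bool) :
    (List.replicate (j + c) false ++ x).drop j = List.replicate c false ++ x := by
  rw [List.replicate_add, List.append_assoc]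
  have := List.drop_left (l₁ := List.replicate j false) (l₂ := List.replicate c false ++ x)
  rwa [List.length_replicate] at this

def Phi (k : ℕ) (u : List Bool) : List Bool :=
  true :: (u.takeWhile id ++
    (if u.dropWhile id = [] then List.replicate k true else List.replicate k false) ++
    u.dropWhile id)

def Psi (k : ℕ) (v : List Bool) : List Bool :=
  ((v.tail.takeWhile id) ++ (v.tail.dropWhile id).drop k).take (v.length - (k+1))

lemma Phi_length (u : List Bool) : (Phi k u).length = u.length + (k + 1) := by
  have h := congrArg List.length (List.takeWhile_append_dropWhile (p := id) (l := u))
  rw [List.length_append] at h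
  rw [Phi]
  split
  · rename_i hdw
    rw [hdw] at h ⊢
    simp only [List.length_cons, List.length_append, List.length_replicate,
      List.length_nil, List.append_nil] at *
    omega
  · simp only [List.length_cons, List.length_append, List.length_replicate] at *
    omega

lemma cons_swap (j : ℕ) (x : List Bool) :
    List.replicate j false ++ false :: x = false :: (List.replicate j false ++ x) := by
  rw [← List.singleton_append, ← List.append_assoc, ← List.replicate_succ',
    List.replicate_succ, List.cons_append]

lemma Phi_WA (u : List Bool) : WA k (Sum.inl 0) (Phi k u) ↔ WA k (Sum.inl 0) u := by
  have hsplit : u = u.takeWhile id ++ u.dropWhile id :=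
    (List.takeWhile_append_dropWhile (p := id) (l := u)).symm
  set m := (u.takeWhile id).length with hm
  have htw : u.takeWhile id = List.replicate m true := takeWhile_id_eq u
  cases hdw : u.dropWhile id with
  | nil =>
    constructor
    · intro _
      rw [hsplit, hdw, List.append_nil, htw]
      have := (WA_ones (k := k) 0 m ([] : List Bool)).mpr (by simp)
      simpa using this
    · intro _
      rw [Phi, htw, hdw, if_pos rfl, List.append_nil]
      rw [WA_inl_true, ← List.replicate_add]
      have := (WA_ones (k := k) (0+1) (m+k) ([] : List Bool)).mpr (by simp)
      simpa using this
  | cons c2 y =>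
    have hc2 : c2 = false := by simpa using head_dropWhile id u hdw
    subst hc2
    have h1 : WA k (Sum.inl 0) (Phi k u) ↔ WA k (Sum.inr (k * m)) y := by
      rw [Phi, htw, hdw, if_neg (List.cons_ne_nil false y)]
      rw [WA_inl_true, List.append_assoc, WA_ones, cons_swap, WA_inl_false]
      rw [show k * (0 + 1 + m) = k * m + k by ring, WA_debt_consume]
    have h2 : WA k (Sum.inl 0) u ↔ WA k (Sum.inr (k * m)) y := by
      conv_lhs => rw [hsplit, htw, hdw]
      rw [WA_ones, WA_inl_false, show k * (0 + m) = k * m by ring]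
    rw [h1, h2]

lemma Psi_Phi (u : List Bool) : Psi k (Phi k u) = u := by
  have hsplit : u = u.takeWhile id ++ u.dropWhile id :=
    (List.takeWhile_append_dropWhile (p := id) (l := u)).symm
  set m := (u.takeWhile id).length with hm
  have htw : u.takeWhile id = List.replicate m true := takeWhile_id_eq u
  have hul : (Phi k u).length - (k+1) = u.length := by rw [Phi_length]; omega
  cases hdw : u.dropWhile id with
  | nil =>
    have hu : u = List.replicate m true := by rw [hsplit, hdw, List.append_nil, htw]
    have hum : u.length = m := by rw [hu]; simp
    rw [Psi, hul]
    have htl : (Phi k u).tail = List.replicate (m + k) true := by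
      rw [Phi, htw, hdw, if_pos rfl, List.append_nil, List.tail_cons, ← List.replicate_add]
    rw [htl, (tw_replicate_true (m+k)).1, (tw_replicate_true (m+k)).2, List.drop_nil,
      List.append_nil, List.take_replicate, hum, hu]
    congr 1
    omega
  | cons c2 y =>
    have hc2 : c2 = false := by simpa using head_dropWhile id u hdw
    subst hc2
    have htl : (Phi k u).tail = List.replicate m true ++ (List.replicate k false
        ++ false :: y) := by
      rw [Phi, htw, hdw, if_neg (List.cons_ne_nil false y), List.tail_cons, List.append_assoc]
    have hz : (List.replicate k false ++ false :: y).head? = some false := by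
      rw [cons_swap]; rfl
    have htd := tdw_ones_append m (List.replicate k false ++ false :: y) hz
    rw [Psi, hul, htl, htd.1, htd.2]
    have hdk : (List.replicate k false ++ false :: y).drop k = false :: y := by
      have := drop_replicate_append k 0 (false :: y)
      simpa using this
    rw [hdk]
    have hu2 : u = List.replicate m true ++ false :: y := by rw [hsplit, htw, hdw]
    rw [← hu2, List.take_length]

lemma WA_true_struct (v₂ : List Bool) (h : WA k (Sum.inl 0) (true :: v₂))
    (hn : k + 1 ≤ (true :: v₂).length) :
    Phi k (Psi k (true :: v₂)) = true :: v₂ ∧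
    (Psi k (true :: v₂)).length = (true :: v₂).length - (k + 1) ∧
    WA k (Sum.inl 0) (Psi k (true :: v₂)) := by
  have hsplit : v₂ = v₂.takeWhile id ++ v₂.dropWhile id :=
    (List.takeWhile_append_dropWhile (p := id) (l := v₂)).symm
  set b := (v₂.takeWhile id).length with hb
  have htw : v₂.takeWhile id = List.replicate b true := takeWhile_id_eq v₂
  cases hdw : v₂.dropWhile id with
  | nil =>
    have hv2 : v₂ = List.replicate b true := by rw [hsplit, hdw, List.append_nil, htw]
    have hbl : v₂.length = b := by rw [hv2]; simp
    have hkb : k ≤ b := by simp only [List.length_cons] at hn; omega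
    have hPsi : Psi k (true :: v₂) = List.replicate (b - k) true := by
      rw [Psi, List.tail_cons, hv2, (tw_replicate_true b).1, (tw_replicate_true b).2,
        List.drop_nil, List.append_nil, List.take_replicate]
      congr 1
      simp only [List.length_cons, List.length_replicate, hbl]
      omega
    refine ⟨?_, ?_, ?_⟩
    · rw [hPsi, Phi, (tw_replicate_true (b-k)).1, (tw_replicate_true (b-k)).2, if_pos rfl,
        List.append_nil, ← List.replicate_add, show b - k + k = b by omega, ← hv2]
    · rw [hPsi]
      simp only [List.length_replicate, List.length_cons, hbl]
      omega
    · rw [hPsi]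
      have := (WA_ones (k := k) 0 (b-k) ([] : List Bool)).mpr (by simp)
      simpa using this
  | cons c2 y =>
    have hc2 : c2 = false := by simpa using head_dropWhile id v₂ hdw
    subst hc2
    have h2 : WA k (Sum.inr (k * (0 + 1 + b))) y := by
      rw [WA_inl_true] at h
      conv at h => rw [hsplit, htw, hdw]
      rw [WA_ones, WA_inl_false] at h
      exact h
    rw [show k * (0 + 1 + b) = k + k * b by ring] at h2
    obtain ⟨y₂, hy, hwy⟩ := WA_debt_split _ y h2
    have hv2 : v₂ = List.replicate b true ++ false :: y := by rw [hsplit, htw, hdw]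
    have hyc : (false : Bool) :: y = List.replicate (k + k * b + 1) false ++ y₂ := by
      rw [hy, List.replicate_succ, List.cons_append]
    have hdk : ((false : Bool) :: y).drop k = List.replicate (k * b + 1) false ++ y₂ := by
      rw [hyc, show k + k * b + 1 = k + (k * b + 1) by omega, drop_replicate_append]
    have hulen : (List.replicate b true ++ (List.replicate (k * b + 1) false ++ y₂)).length
        = (true :: v₂).length - (k + 1) := by
      simp only [List.length_append, List.length_replicate, List.length_cons, hv2, hy,
        List.length_append, List.length_replicate]
      omega
    have hPsi : Psi k (true :: v₂) = List.replicate b true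
        ++ (List.replicate (k * b + 1) false ++ y₂) := by
      rw [Psi, List.tail_cons, htw, hdw, hdk]
      exact List.take_of_length_le (le_of_eq hulen)
    have hne : List.replicate (k * b + 1) false ++ y₂ ≠ [] := by
      rw [List.replicate_succ, List.cons_append]
      exact List.cons_ne_nil _ _
    have htd2 := tdw_ones_append b (List.replicate (k * b + 1) false ++ y₂)
      (by rw [List.replicate_succ, List.cons_append]; rfl)
    refine ⟨?_, ?_, ?_⟩
    · rw [hPsi, Phi, htd2.1, htd2.2, if_neg hne, List.append_assoc,
        ← List.append_assoc (List.replicate k false), ← List.replicate_add,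
        show k + (k * b + 1) = k + k * b + 1 by omega, ← hyc, ← hv2]
    · rw [hPsi, hulen]
    · rw [hPsi, WA_ones, List.replicate_succ, List.cons_append, WA_inl_false,
        show k * (0 + b) = 0 + k * b by ring, WA_debt_consume]
      exact hwy

def stepMap (k m : ℕ) : Vn k (m + k) ⊕ Vn k m → Vn k (m + k + 1)
  | Sum.inl u => ⟨false :: u.1, by simp [u.2.1],
      by rw [WA_inl_false, Nat.mul_zero, WA_inr0_iff_inl0]; exact u.2.2⟩
  | Sum.inr u => ⟨Phi k u.1, by rw [Phi_length, u.2.1]; omega, (Phi_WA u.1).mpr u.2.2⟩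

lemma stepMap_bij (m : ℕ) : Function.Bijective (stepMap k m) := by
  constructor
  · intro a b hab
    have hval := congrArg Subtype.val hab
    rcases a with a | a <;> rcases b with b | b
    · simp only [stepMap] at hval
      exact congrArg Sum.inl (Subtype.ext (by simpa using hval))
    · simp only [stepMap, Phi] at hval
      simp at hval
    · simp only [stepMap, Phi] at hval
      simp at hval
    · simp only [stepMap] at hval
      exact congrArg Sum.inr (Subtype.ext (by
        have := congrArg (Psi k) hval
        rwa [Psi_Phi, Psi_Phi] at this))
  · rintro ⟨v, hlen, hwa⟩
    cases v with
    | nil => simp at hlen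
    | cons x v₂ =>
      cases x
      · refine ⟨Sum.inl ⟨v₂, by simpa using hlen, ?_⟩, Subtype.ext rfl⟩
        rw [WA_inl_false, Nat.mul_zero, WA_inr0_iff_inl0] at hwa
        exact hwa
      · have hn2 : k + 1 ≤ (true :: v₂).length := by rw [hlen]; omega
        obtain ⟨hphi, hlen3, hwa3⟩ := WA_true_struct v₂ hwa hn2
        refine ⟨Sum.inr ⟨Psi k (true :: v₂), by rw [hlen3, hlen]; omega, hwa3⟩,
          Subtype.ext ?_⟩
        simpa [stepMap] using hphi

lemma card_step (m : ℕ) :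
    Nat.card (Vn k (m + k + 1)) = Nat.card (Vn k (m + k)) + Nat.card (Vn k m) := by
  rw [← Nat.card_sum, Nat.card_eq_of_bijective _ (stepMap_bij (k := k) m)]

theorem stmt11 (k : ℕ) (hk : 1 ≤ k) :
    (∀ j : ℕ, j ≤ k → wcount 1 k j = j + 1) ∧
    (∀ n : ℕ, k + 1 ≤ n → wcount 1 k n = wcount 1 k (n - 1) + wcount 1 k (n - (k + 1))) := by
  constructor
  · intro j hj
    exact wcount_base hk j hj
  · intro n hn
    obtain ⟨m, rfl⟩ : ∃ m, n = m + k + 1 := ⟨n - (k + 1), by omega⟩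
    rw [show m + k + 1 - 1 = m + k by omega, show m + k + 1 - (k + 1) = m by omega,
      wcount_eq_card, wcount_eq_card, wcount_eq_card]
    exact card_step m
end
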